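/- Let 0 → E → X → Z → 0 be an exact sequence of Banach spaces in which E is an L∞-space and X has the bounded approximation property. Then Z has the bounded approximation property. -/

import Mathlib

open scoped BigOperators
open Topology Filter

set_option maxHeartbeats 1000000
set_option synthInstance.maxHeartbeats 400000

noncomputable section

/-- A homogeneous map between Banach spaces. -/
def IsHomog {X Y : Type*} [NormedAddCommGroup X] [NormedSpace ℝ X]
    [NormedAddCommGroup Y] [NormedSpace ℝ Y] (f : X → Y) : Prop :=
  ∀ (c : ℝ) (x : X), f (c • x) = c • f x

/-- `f` satisfies the z-linearity estimate with constant `C`. -/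
def ZlinWith {X Y : Type*} [NormedAddCommGroup X] [NormedSpace ℝ X]
    [NormedAddCommGroup Y] [NormedSpace ℝ Y] (f : X → Y) (C : ℝ) : Prop :=
  ∀ (n : ℕ) (x : Fin n → X),
    ‖f (∑ j, x j) - ∑ j, f (x j)‖ ≤ C * ∑ j, ‖x j‖

/-- A z-linear map. -/
def IsZlin {X Y : Type*} [NormedAddCommGroup X] [NormedSpace ℝ X]
    [NormedAddCommGroup Y] [NormedSpace ℝ Y] (f : X → Y) : Prop :=
  IsHomog f ∧ ∃ C > 0, ZlinWith f C

/-- The z-linearity constant `Z(f)`. -/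
noncomputable def zconst {X Y : Type*} [NormedAddCommGroup X] [NormedSpace ℝ X]
    [NormedAddCommGroup Y] [NormedSpace ℝ Y] (f : X → Y) : ℝ :=
  sInf {C : ℝ | 0 ≤ C ∧ ZlinWith f C}

/-- `0 → Y → X → Z → 0` is an exact sequence of Banach spaces. -/
def IsExactSeq {Y X Z : Type*} [NormedAddCommGroup Y] [NormedSpace ℝ Y]
    [NormedAddCommGroup X] [NormedSpace ℝ X]
    [NormedAddCommGroup Z] [NormedSpace ℝ Z]
    (i : Y →L[ℝ] X) (q : X →L[ℝ] Z) : Prop :=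
  Function.Injective i ∧ Function.Surjective q ∧
    LinearMap.range (i : Y →ₗ[ℝ] X) = LinearMap.ker (q : X →ₗ[ℝ] Z)

/-- `ω` is a z-linear map associated with the exact sequence `0 → Y → X → Z → 0`:
it is the difference of a bounded homogeneous selection and a linear selection
of the quotient map. -/
def IsAssoc {Y X Z : Type*} [NormedAddCommGroup Y] [NormedSpace ℝ Y]
    [NormedAddCommGroup X] [NormedSpace ℝ X]
    [NormedAddCommGroup Z] [NormedSpace ℝ Z]
    (ω : Z → Y) (i : Y →L[ℝ] X) (q : X →L[ℝ] Z) : Prop :=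
  IsExactSeq i q ∧
    ∃ (b : Z → X) (l : Z →ₗ[ℝ] X), IsHomog b ∧ (∃ M : ℝ, ∀ z, ‖b z‖ ≤ M * ‖z‖) ∧
      (∀ z, q (b z) = z) ∧ (∀ z, q (l z) = z) ∧ (∀ z, i (ω z) = b z - l z)

/-- Equivalence of two exact sequences with the same subspace and quotient. -/
def SeqEquiv {Y X X' Z : Type*} [NormedAddCommGroup Y] [NormedSpace ℝ Y]
    [NormedAddCommGroup X] [NormedSpace ℝ X]
    [NormedAddCommGroup X'] [NormedSpace ℝ X']
    [NormedAddCommGroup Z] [NormedSpace ℝ Z]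
    (i : Y →L[ℝ] X) (q : X →L[ℝ] Z) (i' : Y →L[ℝ] X') (q' : X' →L[ℝ] Z) : Prop :=
  ∃ T : X →L[ℝ] X', (∀ y, T (i y) = i' y) ∧ (∀ x, q' (T x) = q x)

/-- The exact sequence `0 → Y → X → Z → 0` splits. -/
def Splits {Y X Z : Type*} [NormedAddCommGroup Y] [NormedSpace ℝ Y]
    [NormedAddCommGroup X] [NormedSpace ℝ X]
    [NormedAddCommGroup Z] [NormedSpace ℝ Z]
    (i : Y →L[ℝ] X) (q : X →L[ℝ] Z) : Prop :=
  ∃ r : Z →L[ℝ] X, ∀ z, q (r z) = z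

/-- The exact sequence `0 → Y → X → Z → 0` locally splits: its dual sequence
`0 → Z* → X* → Y* → 0` splits, i.e. the dual `i*` of the embedding admits a
bounded linear section. -/
def LocSplits {Y X Z : Type*} [NormedAddCommGroup Y] [NormedSpace ℝ Y]
    [NormedAddCommGroup X] [NormedSpace ℝ X]
    [NormedAddCommGroup Z] [NormedSpace ℝ Z]
    (i : Y →L[ℝ] X) (q : X →L[ℝ] Z) : Prop :=
  ∃ s : StrongDual ℝ Y →L[ℝ] StrongDual ℝ X,
    ∀ (g : StrongDual ℝ Y) (y : Y), s g (i y) = g y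

/-- The λ-bounded approximation property. -/
def HasBAPWith (X : Type*) [NormedAddCommGroup X] [NormedSpace ℝ X] (l : ℝ) : Prop :=
  ∀ F : Submodule ℝ X, FiniteDimensional ℝ F →
    ∃ T : X →L[ℝ] X, FiniteDimensional ℝ (LinearMap.range (T : X →ₗ[ℝ] X)) ∧
      ‖T‖ ≤ l ∧ ∀ f ∈ F, T f = f

/-- The bounded approximation property. -/
def HasBAP (X : Type*) [NormedAddCommGroup X] [NormedSpace ℝ X] : Prop :=
  ∃ l : ℝ, 1 ≤ l ∧ HasBAPWith X l

/-- A Lindenstrauss–Pełczyński `𝓛₁`-space. -/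
def IsL1Space (E : Type*) [NormedAddCommGroup E] [NormedSpace ℝ E] : Prop :=
  ∃ l : ℝ, 1 ≤ l ∧ ∀ F : Submodule ℝ E, FiniteDimensional ℝ F →
    ∃ G : Submodule ℝ E, F ≤ G ∧ FiniteDimensional ℝ G ∧
      ∃ (n : ℕ) (T : G ≃L[ℝ] PiLp 1 fun _ : Fin n => ℝ),
        ‖T.toContinuousLinearMap‖ * ‖T.symm.toContinuousLinearMap‖ ≤ l

/-- A Lindenstrauss–Pełczyński `𝓛∞`-space. -/
def IsLinftySpace (E : Type*) [NormedAddCommGroup E] [NormedSpace ℝ E] : Prop :=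
  ∃ l : ℝ, 1 ≤ l ∧ ∀ F : Submodule ℝ E, FiniteDimensional ℝ F →
    ∃ G : Submodule ℝ E, F ≤ G ∧ FiniteDimensional ℝ G ∧
      ∃ (n : ℕ) (T : G ≃L[ℝ] PiLp ⊤ fun _ : Fin n => ℝ),
        ‖T.toContinuousLinearMap‖ * ‖T.symm.toContinuousLinearMap‖ ≤ l

/-- Hahn–Banach extension into `ℓ∞ⁿ`. -/
theorem extend_to_linfty {X : Type*} [NormedAddCommGroup X] [NormedSpace ℝ X]
    (M : Submodule ℝ X) (n : ℕ) (φ : M →L[ℝ] PiLp ⊤ fun _ : Fin n => ℝ) :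
    ∃ u : X →L[ℝ] PiLp ⊤ fun _ : Fin n => ℝ,
      (∀ m : M, u m = φ m) ∧ ‖u‖ ≤ ‖φ‖ := by
  -- coordinates of φ
  have hcoord : ∀ k : Fin n, ∃ g : X →L[ℝ] ℝ,
      (∀ m : M, g m = φ m k) ∧ ‖g‖ ≤ ‖φ‖ := by
    intro k
    set φk : M →L[ℝ] ℝ :=
      (ContinuousLinearMap.proj k).comp
        (((PiLp.continuousLinearEquiv ⊤ ℝ fun _ : Fin n => ℝ) :
            (PiLp ⊤ fun _ : Fin n => ℝ) →L[ℝ] (Fin n → ℝ)).comp φ) with hφk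
    obtain ⟨g, hg, hgn⟩ := exists_extension_norm_eq M φk
    refine ⟨g, fun m => hg m, ?_⟩
    rw [hgn]
    refine ContinuousLinearMap.opNorm_le_bound _ (norm_nonneg φ) fun m => ?_
    have h1 : ‖φk m‖ ≤ ‖φ m‖ := by
      have : ‖(φ m) k‖ ≤ ⨆ j, ‖(φ m) j‖ := by
        by_cases hn : Nonempty (Fin n)
        · exact le_ciSup (f := fun j => ‖(φ m) j‖) (Set.Finite.bddAbove (Set.finite_range _)) k
        · exact absurd ⟨k⟩ hn
      simpa [φk, PiLp.norm_eq_ciSup] using this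
    exact h1.trans (φ.le_opNorm m)
  choose g hg hgn using hcoord
  refine ⟨((PiLp.continuousLinearEquiv ⊤ ℝ fun _ : Fin n => ℝ).symm :
      (Fin n → ℝ) →L[ℝ] PiLp ⊤ fun _ : Fin n => ℝ).comp (ContinuousLinearMap.pi g),
      ?_, ?_⟩
  · intro m
    apply PiLp.ext
    intro k
    simpa using hg k m
  · refine ContinuousLinearMap.opNorm_le_bound _ (norm_nonneg φ) fun x => ?_
    rw [show ∀ y : PiLp ⊤ fun _ : Fin n => ℝ, ‖y‖ = ⨆ j, ‖y j‖ from
      fun y => PiLp.norm_eq_ciSup y]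
    refine Real.iSup_le (fun j => ?_) (by positivity)
    simpa using ((g j).le_opNorm x).trans
      (mul_le_mul_of_nonneg_right (hgn j) (norm_nonneg x))

/-- The local retraction lemma: for a finite-dimensional `D ⊆ E` there is a map
`P : X → E` of uniformly bounded norm retracting `i` on `D` and vanishing on the
given vectors `x j`. -/
theorem retraction_lemma {E X : Type*}
    [NormedAddCommGroup E] [NormedSpace ℝ E]
    [NormedAddCommGroup X] [NormedSpace ℝ X]
    (i : E →L[ℝ] X) (hinj : Function.Injective i)
    (lE : ℝ)
    (hEprop : ∀ F : Submodule ℝ E, FiniteDimensional ℝ F →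
      ∃ G : Submodule ℝ E, F ≤ G ∧ FiniteDimensional ℝ G ∧
        ∃ (n : ℕ) (T : G ≃L[ℝ] PiLp ⊤ fun _ : Fin n => ℝ),
          ‖T.toContinuousLinearMap‖ * ‖T.symm.toContinuousLinearMap‖ ≤ lE)
    (ci : ℝ) (hci : 0 ≤ ci) (hilow : ∀ e : E, ‖e‖ ≤ ci * ‖i e‖)
    (k : ℕ) (x : Fin k → X) (Cpi : ℝ) (hCpi : 0 ≤ Cpi)
    (Hx : ∀ (e : E) (c : Fin k → ℝ), ‖i e‖ ≤ Cpi * ‖i e + ∑ j, c j • x j‖)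
    (Hind : ∀ c : Fin k → ℝ, ∑ j, c j • x j = 0 → ∀ j, c j = 0)
    (D : Submodule ℝ E) (hD : FiniteDimensional ℝ D) :
    ∃ P : X →L[ℝ] E, ‖P‖ ≤ lE * (ci * Cpi) ∧ (∀ e ∈ D, P (i e) = e) ∧
      ∀ j, P (x j) = 0 := by
  obtain ⟨G, hDG, hGfin, n, T₀, hT₀⟩ := hEprop D hD
  haveI := hGfin
  set m := Module.finrank ℝ G with hm
  set bG : Module.Basis (Fin m) ℝ G := Module.finBasis ℝ G with hbG
  set w : Fin m ⊕ Fin k → X := Sum.elim (fun l => i (bG l)) x with hw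
  -- key fact A: if `i g` lies in the span of the `x j` for `g ∈ G` then `g = 0`
  have spanx_fact : ∀ e : E, i e ∈ Submodule.span ℝ (Set.range x) → e = 0 := by
    intro e he
    obtain ⟨c, hc⟩ := (Submodule.mem_span_range_iff_exists_fun ℝ).1 he
    have h0 : i e + ∑ j, (-c j) • x j = 0 := by
      simp only [neg_smul, Finset.sum_neg_distrib, hc]; abel
    have := Hx e fun j => -c j
    rw [h0, norm_zero, mul_zero] at this
    have : i e = 0 := norm_le_zero_iff.1 this
    have := hinj (a₁ := e) (a₂ := 0) (by simpa using this)
    exact this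
  -- linear independence of the family `w`
  have hwli : LinearIndependent ℝ w := by
    rw [Fintype.linearIndependent_iff]
    intro c hc
    rw [Fintype.sum_sum_type] at hc
    set e : G := ∑ l, c (Sum.inl l) • bG l with he
    have hie : (e : E) = ∑ l, c (Sum.inl l) • (bG l : E) := by
      simp [he]
    have h1 : i (e : E) + ∑ j, c (Sum.inr j) • x j = 0 := by
      rw [hie, map_sum]
      simp only [map_smul]
      simpa [w] using hc
    have h2 : ‖i (e : E)‖ ≤ Cpi * ‖i (e : E) + ∑ j, c (Sum.inr j) • x j‖ :=
      Hx _ _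
    rw [h1, norm_zero, mul_zero] at h2
    have h3 : (e : E) = 0 := hinj (by simpa using norm_le_zero_iff.1 h2)
    have h4 : e = 0 := Subtype.ext h3
    have hc0 : ∀ l, c (Sum.inl l) = 0 := by
      have := Fintype.linearIndependent_iff.1 bG.linearIndependent
        (fun l => c (Sum.inl l)) (by rw [← he, h4])
      exact this
    have hx0 : ∑ j, c (Sum.inr j) • x j = 0 := by
      have : i (e : E) = 0 := by rw [h3, map_zero]
      rw [this, zero_add] at h1; exact h1
    rintro (l | j)
    · exact hc0 l
    · exact Hind _ hx0 j
  set M : Submodule ℝ X := Submodule.span ℝ (Set.range w) with hM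
  haveI : FiniteDimensional ℝ M := FiniteDimensional.span_of_finite ℝ (Set.finite_range w)
  set bM : Module.Basis (Fin m ⊕ Fin k) ℝ M := Module.Basis.span hwli with hbM
  set dec : M →ₗ[ℝ] G := bM.constr ℝ (Sum.elim (fun l => bG l) fun _ => (0 : G))
    with hdecdef
  -- main property of `dec`
  have hdec : ∀ mm : M, (mm : X) - i ((dec mm : G) : E) ∈ Submodule.span ℝ (Set.range x) := by
    intro mm
    set θ : M →ₗ[ℝ] X :=
      M.subtype - (i.toLinearMap.comp ((G.subtype).comp dec)) with hθ
    have hθapp : ∀ nn : M, θ nn = (nn : X) - i ((dec nn : G) : E) := fun nn => rfl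
    have hsub : (⊤ : Submodule ℝ M) ≤
        Submodule.comap θ (Submodule.span ℝ (Set.range x)) := by
      rw [← bM.span_eq, Submodule.span_le]
      rintro _ ⟨l, rfl⟩
      simp only [SetLike.mem_coe, Submodule.mem_comap, hθapp]
      rcases l with l | j
      · have h1 : ((bM (Sum.inl l) : M) : X) = w (Sum.inl l) := congrArg Subtype.val (Module.Basis.span_apply hwli _)
        have h2 : dec (bM (Sum.inl l)) = bG l := by
          rw [hdecdef, bM.constr_basis]; rfl
        rw [h1, h2]
        simp [w]
      · have h1 : ((bM (Sum.inr j) : M) : X) = w (Sum.inr j) := congrArg Subtype.val (Module.Basis.span_apply hwli _)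
        have h2 : dec (bM (Sum.inr j)) = 0 := by
          rw [hdecdef, bM.constr_basis]; rfl
        have hxmem : x j ∈ Submodule.span ℝ (Set.range x) :=
          Submodule.subset_span (Set.mem_range_self j)
        rw [h1, h2]
        simpa [w] using hxmem
    have := hsub (Submodule.mem_top (x := mm))
    rw [Submodule.mem_comap, hθapp] at this
    exact this
  -- norm estimate for `dec`
  have hdecnorm : ∀ mm : M, ‖i ((dec mm : G) : E)‖ ≤ Cpi * ‖(mm : X)‖ := by
    intro mm
    obtain ⟨c, hc⟩ := (Submodule.mem_span_range_iff_exists_fun ℝ).1 (hdec mm)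
    have h1 : i ((dec mm : G) : E) + ∑ j, c j • x j = (mm : X) := by rw [hc]; abel
    calc ‖i ((dec mm : G) : E)‖ ≤ Cpi * ‖i ((dec mm : G) : E) + ∑ j, c j • x j‖ :=
          Hx _ _
      _ = Cpi * ‖(mm : X)‖ := by rw [h1]
  set deccont : M →L[ℝ] G := LinearMap.toContinuousLinearMap dec with hdeccont
  set φ : M →L[ℝ] PiLp ⊤ fun _ : Fin n => ℝ :=
    T₀.toContinuousLinearMap.comp deccont with hφdef
  have hφapp : ∀ mm : M, φ mm = T₀ (dec mm) := fun mm => rfl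
  have hT0nn : (0:ℝ) ≤ ‖T₀.toContinuousLinearMap‖ := ContinuousLinearMap.opNorm_nonneg _
  have hφ : ‖φ‖ ≤ ‖T₀.toContinuousLinearMap‖ * (ci * Cpi) := by
    refine ContinuousLinearMap.opNorm_le_bound _ (by positivity) fun mm => ?_
    have e1 : ‖φ mm‖ ≤ ‖T₀.toContinuousLinearMap‖ * ‖dec mm‖ := by
      rw [hφapp]
      exact (T₀.toContinuousLinearMap.le_opNorm (dec mm))
    have e2 : ‖dec mm‖ ≤ ci * ‖i ((dec mm : G) : E)‖ := hilow _
    have e3 := hdecnorm mm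
    have e4 : ‖(mm : X)‖ = ‖mm‖ := rfl
    have p1 := mul_le_mul_of_nonneg_left e2 hT0nn
    have p2 := mul_le_mul_of_nonneg_left e3 (mul_nonneg hT0nn hci)
    have p3 : ‖T₀.toContinuousLinearMap‖ * (ci * (Cpi * ‖(mm : X)‖)) =
        ‖T₀.toContinuousLinearMap‖ * (ci * Cpi) * ‖mm‖ := by rw [e4]; ring
    have p4 : ‖T₀.toContinuousLinearMap‖ * (ci * ‖i ((dec mm : G) : E)‖) =
        ‖T₀.toContinuousLinearMap‖ * ci * ‖i ((dec mm : G) : E)‖ := by ring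
    linarith only [e1, p1, p2, p3, p4]
  have hiM : ∀ g : G, i (g : E) ∈ M := by
    intro g
    have hsub : (⊤ : Submodule ℝ G) ≤
        Submodule.comap (i.toLinearMap.comp G.subtype) M := by
      rw [← bG.span_eq, Submodule.span_le]
      rintro _ ⟨l, rfl⟩
      exact Submodule.subset_span ⟨Sum.inl l, rfl⟩
    exact hsub (Submodule.mem_top (x := g))
  have hxmemM : ∀ j, x j ∈ M := fun j => Submodule.subset_span ⟨Sum.inr j, rfl⟩
  have hdeceq : ∀ g : G, dec ⟨i (g : E), hiM g⟩ = g := by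
    intro g
    set mm : M := ⟨i (g : E), hiM g⟩ with hmm
    have h1 := hdec mm
    have h2 : i (((g - dec mm : G) : E)) ∈ Submodule.span ℝ (Set.range x) := by
      have : ((g - dec mm : G) : E) = (g : E) - ((dec mm : G) : E) := rfl
      rw [this, map_sub]
      exact h1
    have h3 := spanx_fact _ h2
    have h4 : g - dec mm = 0 := Subtype.ext h3
    have := sub_eq_zero.1 h4
    exact this.symm
  clear_value dec bM
  clear hdecdef hbM hwli
  clear_value M
  clear hM hw
  obtain ⟨u, hu, hun⟩ := extend_to_linfty M n φ
  have hu' : ∀ mm : M, u mm = T₀ (dec mm) := fun mm => (hu mm).trans (hφapp mm)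
  have hun' : ‖u‖ ≤ ‖T₀.toContinuousLinearMap‖ * (ci * Cpi) := le_trans hun hφ
  clear hu hun hφ hφapp
  clear_value φ deccont
  clear hφdef hdeccont φ deccont
  set P : X →L[ℝ] E :=
    G.subtypeL.comp (T₀.symm.toContinuousLinearMap.comp u) with hPdef
  have hPapp : ∀ xx : X, P xx = ((T₀.symm (u xx) : G) : E) := fun xx => rfl
  refine ⟨P, ?_, ?_, ?_⟩
  · have hlE : (0:ℝ) ≤ lE := le_trans (by positivity) hT₀
    refine ContinuousLinearMap.opNorm_le_bound _ (by positivity) fun xx => ?_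
    have e0 : ‖P xx‖ = ‖T₀.symm (u xx)‖ := rfl
    have e1 : ‖T₀.symm (u xx)‖ ≤ ‖T₀.symm.toContinuousLinearMap‖ * ‖u xx‖ :=
      T₀.symm.toContinuousLinearMap.le_opNorm (u xx)
    have e2 : ‖u xx‖ ≤ ‖u‖ * ‖xx‖ := u.le_opNorm xx
    have e3 : ‖u‖ ≤ ‖T₀.toContinuousLinearMap‖ * (ci * Cpi) := hun'
    have bnn : (0:ℝ) ≤ ‖T₀.symm.toContinuousLinearMap‖ :=
      ContinuousLinearMap.opNorm_nonneg _
    have p1 := mul_le_mul_of_nonneg_left e2 bnn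
    have p2 := mul_le_mul_of_nonneg_left
      (mul_le_mul_of_nonneg_right e3 (norm_nonneg xx)) bnn
    have p3 : ‖T₀.symm.toContinuousLinearMap‖ *
        (‖T₀.toContinuousLinearMap‖ * (ci * Cpi) * ‖xx‖) =
        (‖T₀.toContinuousLinearMap‖ * ‖T₀.symm.toContinuousLinearMap‖) *
          ((ci * Cpi) * ‖xx‖) := by ring
    have p4 := mul_le_mul_of_nonneg_right hT₀
      (mul_nonneg (mul_nonneg hci hCpi) (norm_nonneg xx))
    have p5 : lE * (ci * Cpi * ‖xx‖) = lE * (ci * Cpi) * ‖xx‖ := by ring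
    linarith only [e0, e1, p1, p2, p3, p4, p5]
  · intro e he
    have he' : e ∈ G := hDG he
    set g : G := ⟨e, he'⟩ with hg
    have h1 : u (i e) = T₀ (dec ⟨i (g : E), hiM g⟩) := hu' ⟨i (g : E), hiM g⟩
    rw [hPapp, h1, hdeceq, T₀.symm_apply_apply]
  · intro j
    set mm : M := ⟨x j, hxmemM j⟩ with hmm
    have h1 := hdec mm
    have h2 : i ((dec mm : G) : E) ∈ Submodule.span ℝ (Set.range x) := by
      have hx : (mm : X) ∈ Submodule.span ℝ (Set.range x) :=
        Submodule.subset_span (Set.mem_range_self j)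
      have := Submodule.sub_mem _ hx h1
      simpa using this
    have h3 : dec mm = 0 := Subtype.ext (spanx_fact _ h2)
    have h4 : u (x j) = T₀ (dec mm) := hu' mm
    rw [hPapp, h4, h3]
    simp

/-- Uniformly bounded linear liftings of finite families. -/
theorem uniform_lift {E X Z : Type*}
    [NormedAddCommGroup E] [NormedSpace ℝ E]
    [NormedAddCommGroup X] [NormedSpace ℝ X]
    [NormedAddCommGroup Z] [NormedSpace ℝ Z]
    (i : E →L[ℝ] X) (q : X →L[ℝ] Z) (hinj : Function.Injective i)
    (lE : ℝ)
    (hEprop : ∀ F : Submodule ℝ E, FiniteDimensional ℝ F →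
      ∃ G : Submodule ℝ E, F ≤ G ∧ FiniteDimensional ℝ G ∧
        ∃ (n : ℕ) (T : G ≃L[ℝ] PiLp ⊤ fun _ : Fin n => ℝ),
          ‖T.toContinuousLinearMap‖ * ‖T.symm.toContinuousLinearMap‖ ≤ lE)
    (ci : ℝ) (hci : 0 ≤ ci) (hilow : ∀ e : E, ‖e‖ ≤ ci * ‖i e‖)
    (hiker : ∀ v : X, q v = 0 → ∃ e : E, i e = v)
    (hqi : ∀ e : E, q (i e) = 0)
    (cq : ℝ) (hcq0 : 0 ≤ cq) (hcq : ∀ z : Z, ∃ x : X, q x = z ∧ ‖x‖ ≤ cq * ‖z‖) :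
    ∃ C₁ : ℝ, 0 ≤ C₁ ∧ ∀ (k : ℕ) (z : Fin k → Z), LinearIndependent ℝ z →
      ∃ x : Fin k → X, (∀ j, q (x j) = z j) ∧
        ∀ c : Fin k → ℝ, ‖∑ j, c j • x j‖ ≤ C₁ * ‖∑ j, c j • z j‖ := by
  have hlE0 : (0:ℝ) ≤ lE := by
    obtain ⟨G, _, _, n, T₀, hT₀⟩ := hEprop ⊥ inferInstance
    exact le_trans (mul_nonneg (ContinuousLinearMap.opNorm_nonneg _)
      (ContinuousLinearMap.opNorm_nonneg _)) hT₀
  set μ : ℝ := lE * ci with hμ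
  have hμ0 : 0 ≤ μ := by positivity
  set M₁ : ℝ := (1 + ‖i‖ * μ) * cq with hM₁
  have hM₁0 : 0 ≤ M₁ := by positivity
  refine ⟨3 * M₁, by positivity, ?_⟩
  intro k z hzli
  set W : Submodule ℝ Z := Submodule.span ℝ (Set.range z) with hW
  haveI : FiniteDimensional ℝ W := FiniteDimensional.span_of_finite ℝ (Set.finite_range z)
  set bW : Module.Basis (Fin k) ℝ W := Module.Basis.span hzli with hbW
  have hbWcoe : ∀ j, ((bW j : W) : Z) = z j := fun j => congrArg Subtype.val (Module.Basis.span_apply hzli j)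
  -- rough lifts of the basis vectors
  have hy : ∀ j, ∃ x : X, q x = z j ∧ ‖x‖ ≤ cq * ‖z j‖ := fun j => hcq (z j)
  choose y hy1 _ using hy
  set Λ₀ : W →ₗ[ℝ] X := bW.constr ℝ y with hΛ₀
  have hqΛ₀ : ∀ ww : W, q (Λ₀ ww) = (ww : Z) := by
    have : (q : X →ₗ[ℝ] Z).comp Λ₀ = W.subtype := by
      refine bW.ext fun j => ?_
      simp only [LinearMap.comp_apply, hΛ₀, bW.constr_basis]
      rw [show ((q : X →ₗ[ℝ] Z) (y j)) = q (y j) from rfl, hy1 j]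
      exact (hbWcoe j).symm
    intro ww
    have := LinearMap.congr_fun this ww
    exact this
  -- good lifts for each element of `W`
  have hgl : ∀ w : W, ∃ x : X, q x = (w : Z) ∧ ‖x‖ ≤ cq * ‖(w : Z)‖ :=
    fun w => hcq (w : Z)
  choose uw huw1 huw2 using hgl
  have hker : ∀ w : W, ∃ e : E, i e = Λ₀ w - uw w := by
    intro w
    refine hiker _ ?_
    rw [map_sub, hqΛ₀, huw1, sub_self]
  choose ew hew using hker
  -- a finite 1/2-net of the sphere of `W`
  obtain ⟨t, ht⟩ := (isCompact_sphere (0 : W) 1).elim_finite_subcover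
    (fun w : W => Metric.ball w (1/2)) (fun w => Metric.isOpen_ball)
    (fun v hv => Set.mem_iUnion.2 ⟨v, by simp⟩)
  set D : Submodule ℝ E := Submodule.span ℝ (ew '' (t : Set W)) with hD
  haveI : FiniteDimensional ℝ D :=
    FiniteDimensional.span_of_finite ℝ ((t : Set W).toFinite.image ew)
  obtain ⟨P, hPnorm, hPD, -⟩ := retraction_lemma i hinj lE hEprop ci hci hilow
    0 (fun j => j.elim0) 1 zero_le_one
    (by intro e c; simp) (by intro c _ j; exact j.elim0) D inferInstance
  rw [mul_one] at hPnorm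
  rw [← hμ] at hPnorm
  set Λ : W →ₗ[ℝ] X := Λ₀ - (i.toLinearMap.comp (P.toLinearMap.comp Λ₀)) with hΛ
  have hΛapp : ∀ ww : W, Λ ww = Λ₀ ww - i (P (Λ₀ ww)) := fun ww => rfl
  have hqΛ : ∀ ww : W, q (Λ ww) = (ww : Z) := by
    intro ww
    rw [hΛapp, map_sub, hqΛ₀, hqi, sub_zero]
  -- bound at net points
  have hnet : ∀ w ∈ t, ‖w‖ ≤ 3/2 → ‖Λ w‖ ≤ (3/2) * M₁ := by
    intro w hw hwn
    have hewD : ew w ∈ D := Submodule.subset_span ⟨w, hw, rfl⟩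
    have h1 : Λ w = uw w - i (P (uw w)) := by
      have h2 : Λ₀ w = uw w + i (ew w) := by rw [hew]; abel
      rw [hΛapp, h2, map_add, hPD _ hewD, map_add]
      abel
    rw [h1]
    have h3 : ‖uw w - i (P (uw w))‖ ≤ ‖uw w‖ + ‖i‖ * (μ * ‖uw w‖) := by
      refine le_trans (norm_sub_le _ _) ?_
      have := i.le_opNorm (P (uw w))
      have h4 := P.le_opNorm (uw w)
      have h5 : ‖i (P (uw w))‖ ≤ ‖i‖ * (μ * ‖uw w‖) := by
        refine le_trans (i.le_opNorm _) ?_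
        refine mul_le_mul_of_nonneg_left ?_ (norm_nonneg _)
        exact le_trans h4 (mul_le_mul_of_nonneg_right hPnorm (norm_nonneg _))
      linarith only [h5]
    have h6 : ‖uw w‖ ≤ cq * (3/2) := by
      refine le_trans (huw2 w) ?_
      have : ‖(w : Z)‖ = ‖w‖ := rfl
      rw [this]
      exact mul_le_mul_of_nonneg_left hwn hcq0
    calc ‖uw w - i (P (uw w))‖ ≤ ‖uw w‖ + ‖i‖ * (μ * ‖uw w‖) := h3
      _ = (1 + ‖i‖ * μ) * ‖uw w‖ := by ring
      _ ≤ (1 + ‖i‖ * μ) * (cq * (3/2)) := by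
          refine mul_le_mul_of_nonneg_left h6 ?_
          positivity
      _ = (3/2) * M₁ := by rw [hM₁]; ring
  set Λc : W →L[ℝ] X := LinearMap.toContinuousLinearMap Λ with hΛc
  set A : ℝ := ‖Λc‖ with hA
  have hAB : A ≤ (3/2) * M₁ + A * (1/2) := by
    refine ContinuousLinearMap.opNorm_le_bound _ ?_ fun vv => ?_
    · have : (0:ℝ) ≤ A := ContinuousLinearMap.opNorm_nonneg _
      linarith only [this, hM₁0]
    rcases eq_or_ne vv 0 with rfl | hvv
    · simp
    · have hnv : ‖vv‖ ≠ 0 := norm_ne_zero_iff.2 hvv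
      set v : W := ‖vv‖⁻¹ • vv with hv
      have hvs : v ∈ Metric.sphere (0 : W) 1 := by
        have : ‖v‖ = 1 := by
          rw [hv, norm_smul, norm_inv, norm_norm, inv_mul_cancel₀ hnv]
        simpa [Metric.mem_sphere, dist_zero_right] using this
      obtain ⟨w, hwt, hvw⟩ : ∃ w ∈ t, v ∈ Metric.ball w (1/2) := by
        have := ht hvs
        simpa using this
      have h7 : ‖v - w‖ < 1/2 := by
        rw [Metric.mem_ball, dist_eq_norm] at hvw
        exact hvw
      have h8 : ‖v‖ = 1 := by
        simpa [Metric.mem_sphere, dist_zero_right] using hvs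
      have hwn : ‖w‖ ≤ 3/2 := by
        have h9 : ‖w‖ ≤ ‖v‖ + ‖v - w‖ := by
          have h10 : w = v - (v - w) := by abel
          calc ‖w‖ = ‖v - (v - w)‖ := by rw [← h10]
            _ ≤ ‖v‖ + ‖v - w‖ := norm_sub_le _ _
        linarith only [h7, h9, h8.le]
      have h10 : ‖Λc v‖ ≤ (3/2) * M₁ + A * (1/2) := by
        have h11 : Λc v = Λc w + Λc (v - w) := by rw [map_sub]; abel
        have h12 : ‖Λc (v - w)‖ ≤ A * ‖v - w‖ := Λc.le_opNorm _
        have h13 : ‖v - w‖ ≤ 1/2 := le_of_lt h7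
        have h14 : ‖Λc w‖ ≤ (3/2) * M₁ := hnet w hwt hwn
        calc ‖Λc v‖ ≤ ‖Λc w‖ + ‖Λc (v - w)‖ := by rw [h11]; exact norm_add_le _ _
          _ ≤ (3/2) * M₁ + A * (1/2) := by
              have := mul_le_mul_of_nonneg_left h13
                (ContinuousLinearMap.opNorm_nonneg Λc)
              linarith only [h12, h14, this]
      have h15 : ‖Λc vv‖ = ‖vv‖ * ‖Λc v‖ := by
        rw [hv, map_smul, norm_smul, norm_inv, norm_norm, ← mul_assoc,
          mul_inv_cancel₀ hnv, one_mul]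
      rw [h15]
      calc ‖vv‖ * ‖Λc v‖ ≤ ‖vv‖ * ((3/2) * M₁ + A * (1/2)) :=
            mul_le_mul_of_nonneg_left h10 (norm_nonneg _)
        _ = ((3/2) * M₁ + A * (1/2)) * ‖vv‖ := by ring
  have hA3 : A ≤ 3 * M₁ := by linarith only [hAB]
  refine ⟨fun j => Λc (bW j), ?_, ?_⟩
  · intro j
    show q (Λc (bW j)) = z j
    have h20 : Λc (bW j) = Λ (bW j) := rfl
    rw [h20, hqΛ, hbWcoe]
  · intro c
    show ‖∑ j, c j • Λc (bW j)‖ ≤ 3 * M₁ * ‖∑ j, c j • z j‖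
    have h16 : ∑ j, c j • Λc (bW j) = Λc (∑ j, c j • bW j) := by
      rw [map_sum]
      simp [map_smul]
    have h17 : ‖Λc (∑ j, c j • bW j)‖ ≤ A * ‖∑ j, c j • bW j‖ := Λc.le_opNorm _
    have h18 : ‖(∑ j, c j • bW j : W)‖ = ‖∑ j, c j • z j‖ := by
      have : ((∑ j, c j • bW j : W) : Z) = ∑ j, c j • z j := by
        push_cast
        exact Finset.sum_congr rfl fun j _ => by rw [hbWcoe]
      rw [show ‖(∑ j, c j • bW j : W)‖ = ‖((∑ j, c j • bW j : W) : Z)‖ from rfl, this]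
    rw [h16]
    calc ‖Λc (∑ j, c j • bW j)‖ ≤ A * ‖∑ j, c j • z j‖ := by rw [← h18]; exact h17
      _ ≤ 3 * M₁ * ‖∑ j, c j • z j‖ :=
          mul_le_mul_of_nonneg_right hA3 (norm_nonneg _)

/-- Ultrafilter-limit construction of a bounded extension of `q∘T∘i`
vanishing on the `x j`. -/
theorem limit_R {E X Z : Type*}
    [NormedAddCommGroup E] [NormedSpace ℝ E]
    [NormedAddCommGroup X] [NormedSpace ℝ X]
    [NormedAddCommGroup Z] [NormedSpace ℝ Z]
    (i : E →L[ℝ] X) (q : X →L[ℝ] Z) (T : X →L[ℝ] X)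
    (hTfin : FiniteDimensional ℝ (LinearMap.range (T : X →ₗ[ℝ] X)))
    (μ : ℝ) (hμ0 : 0 ≤ μ) (k : ℕ) (x : Fin k → X)
    (hP : ∀ D : Submodule ℝ E, FiniteDimensional ℝ D →
      ∃ P : X →L[ℝ] E, ‖P‖ ≤ μ ∧ (∀ e ∈ D, P (i e) = e) ∧ ∀ j, P (x j) = 0) :
    ∃ R : X →L[ℝ] Z, ‖R‖ ≤ μ * ‖(q.comp T).comp i‖ ∧
      (∀ e : E, R (i e) = q (T (i e))) ∧ (∀ j, R (x j) = 0) ∧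
      ∀ v : X, R v ∈ Submodule.map (q : X →ₗ[ℝ] Z) (LinearMap.range (T : X →ₗ[ℝ] X)) := by
  classical
  set δ : E →L[ℝ] Z := (q.comp T).comp i with hδ
  set Y : Submodule ℝ Z :=
    Submodule.map (q : X →ₗ[ℝ] Z) (LinearMap.range (T : X →ₗ[ℝ] X)) with hY
  haveI : FiniteDimensional ℝ Y := by
    haveI := hTfin
    exact Module.Finite.map _ _
  -- the directed set of finite-dimensional subspaces of `E`
  let DS := {D : Submodule ℝ E // FiniteDimensional ℝ D}
  haveI : Nonempty DS := ⟨⟨⊥, inferInstance⟩⟩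
  let sec : DS → Set DS := fun D => {D' | D.1 ≤ D'.1}
  set ℱ : Filter DS := ⨅ D, Filter.principal (sec D) with hℱ
  haveI hℱne : ℱ.NeBot := by
    refine Filter.iInf_neBot_of_directed ?_ ?_
    · intro D D'
      haveI := D.2; haveI := D'.2
      refine ⟨⟨D.1 ⊔ D'.1, inferInstance⟩, ?_, ?_⟩
      · refine Filter.principal_mono.2 fun D'' hD'' => ?_
        have h1 : D.1 ⊔ D'.1 ≤ D''.1 := hD''
        exact le_trans le_sup_left h1
      · refine Filter.principal_mono.2 fun D'' hD'' => ?_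
        have h1 : D.1 ⊔ D'.1 ≤ D''.1 := hD''
        exact le_trans le_sup_right h1
    · intro D
      exact Filter.principal_neBot_iff.2 ⟨D, le_refl D.1⟩
  set 𝒰 : Ultrafilter DS := Ultrafilter.of ℱ with h𝒰
  have hsec : ∀ D : DS, sec D ∈ 𝒰 := by
    intro D
    exact Ultrafilter.of_le ℱ (Filter.mem_iInf_of_mem D (Filter.mem_principal_self _))
  choose P hPμ hPret hPx using fun D : DS => hP D.1 D.2
  have hmemY : ∀ (v : X) (D : DS), δ (P D v) ∈ Y := by
    intro v D
    exact ⟨T (i (P D v)), LinearMap.mem_range_self _ _, rfl⟩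
  set h : X → DS → Y := fun v D => ⟨δ (P D v), hmemY v D⟩ with hh
  have hbd : ∀ (v : X) (D : DS), ‖h v D‖ ≤ μ * ‖δ‖ * ‖v‖ := by
    intro v D
    have h1 : ‖δ (P D v)‖ ≤ ‖δ‖ * ‖P D v‖ := δ.le_opNorm _
    have h2 : ‖P D v‖ ≤ μ * ‖v‖ :=
      le_trans (P D |>.le_opNorm v) (mul_le_mul_of_nonneg_right (hPμ D) (norm_nonneg _))
    have h3 : ‖h v D‖ = ‖δ (P D v)‖ := rfl
    rw [h3]
    calc ‖δ (P D v)‖ ≤ ‖δ‖ * ‖P D v‖ := h1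
      _ ≤ ‖δ‖ * (μ * ‖v‖) :=
          mul_le_mul_of_nonneg_left h2 (norm_nonneg _)
      _ = μ * ‖δ‖ * ‖v‖ := by ring
  have hlim : ∀ v : X, ∃ y : Y, Filter.Tendsto (h v) 𝒰 (𝓝 y) := by
    intro v
    have hball : Metric.closedBall (0 : Y) (μ * ‖δ‖ * ‖v‖) ∈ Ultrafilter.map (h v) 𝒰 := by
      have hmem : ∀ D, h v D ∈ Metric.closedBall (0 : Y) (μ * ‖δ‖ * ‖v‖) := fun D => by
        simpa [Metric.mem_closedBall, dist_zero_right] using hbd v D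
      exact Filter.mem_map.2 (Filter.mem_of_superset Filter.univ_mem fun D _ => hmem D)
    obtain ⟨y, _, hy⟩ := (isCompact_closedBall (0 : Y) (μ * ‖δ‖ * ‖v‖)).ultrafilter_le_nhds
      (Ultrafilter.map (h v) 𝒰) (Filter.le_principal_iff.2 hball)
    exact ⟨y, hy⟩
  choose Rf hRf using hlim
  have hadd : ∀ v v' : X, Rf (v + v') = Rf v + Rf v' := by
    intro v v'
    have h1 : h (v + v') = fun D => h v D + h v' D := by
      funext D
      apply Subtype.ext
      show δ (P D (v + v')) = δ (P D v) + δ (P D v')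
      rw [map_add, map_add]
    have h2 : Filter.Tendsto (h (v + v')) 𝒰 (𝓝 (Rf v + Rf v')) := by
      rw [h1]; exact (hRf v).add (hRf v')
    exact tendsto_nhds_unique (hRf (v + v')) h2
  have hsmul : ∀ (c : ℝ) (v : X), Rf (c • v) = c • Rf v := by
    intro c v
    have h1 : h (c • v) = fun D => c • h v D := by
      funext D
      apply Subtype.ext
      show δ (P D (c • v)) = c • δ (P D v)
      rw [map_smul, map_smul]
    have h2 : Filter.Tendsto (h (c • v)) 𝒰 (𝓝 (c • Rf v)) := by
      rw [h1]; exact (hRf v).const_smul c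
    exact tendsto_nhds_unique (hRf (c • v)) h2
  have hnorm : ∀ v, ‖Rf v‖ ≤ μ * ‖δ‖ * ‖v‖ := fun v =>
    le_of_tendsto (hRf v).norm (Filter.Eventually.of_forall (hbd v))
  set Rlin : X →ₗ[ℝ] Z :=
    { toFun := fun v => ((Rf v : Y) : Z)
      map_add' := fun v v' => by
        show ((Rf (v + v') : Y) : Z) = ((Rf v : Y) : Z) + ((Rf v' : Y) : Z)
        rw [hadd]; rfl
      map_smul' := fun c v => by
        show ((Rf (c • v) : Y) : Z) = c • ((Rf v : Y) : Z)
        rw [hsmul]; rfl } with hRlin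
  have hRlinb : ∀ v, ‖Rlin v‖ ≤ μ * ‖δ‖ * ‖v‖ := by
    intro v
    have : ‖Rlin v‖ = ‖Rf v‖ := rfl
    rw [this]; exact hnorm v
  set R : X →L[ℝ] Z := Rlin.mkContinuous (μ * ‖δ‖) hRlinb with hR
  have hRapp : ∀ v, R v = ((Rf v : Y) : Z) := fun v => rfl
  refine ⟨R, ?_, ?_, ?_, ?_⟩
  · exact Rlin.mkContinuous_norm_le (mul_nonneg hμ0 (norm_nonneg _)) hRlinb
  · intro e
    have hmem : δ e ∈ Y := ⟨T (i e), LinearMap.mem_range_self _ _, rfl⟩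
    haveI hfinsp : FiniteDimensional ℝ (Submodule.span ℝ ({e} : Set E)) :=
      FiniteDimensional.span_of_finite ℝ (Set.finite_singleton e)
    set De : DS := ⟨Submodule.span ℝ ({e} : Set E), hfinsp⟩ with hDe
    have hev : ∀ D' ∈ sec De, h (i e) D' = ⟨δ e, hmem⟩ := by
      intro D' hD'
      apply Subtype.ext
      show δ (P D' (i e)) = δ e
      rw [hPret D' e (hD' (Submodule.mem_span_singleton_self e))]
    have h2 : Filter.Tendsto (h (i e)) 𝒰 (𝓝 ⟨δ e, hmem⟩) := by
      refine Filter.Tendsto.congr' ?_ tendsto_const_nhds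
      exact Filter.eventuallyEq_of_mem (hsec De) fun D' hD' => (hev D' hD').symm
    have h3 : Rf (i e) = ⟨δ e, hmem⟩ := tendsto_nhds_unique (hRf (i e)) h2
    rw [hRapp, h3]
    rfl
  · intro j
    have h1 : h (x j) = fun _ => (0 : Y) := by
      funext D
      apply Subtype.ext
      show δ (P D (x j)) = 0
      rw [hPx D j, map_zero]
    have h2 : Filter.Tendsto (h (x j)) 𝒰 (𝓝 (0 : Y)) := by
      rw [h1]; exact tendsto_const_nhds
    have h3 : Rf (x j) = 0 := tendsto_nhds_unique (hRf (x j)) h2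
    rw [hRapp, h3]
    rfl
  · intro v
    rw [hRapp]
    exact (Rf v).2

/-- If `0 → E → X → Z → 0` is exact with `E` an `𝓛∞`-space and `X` has the BAP,
then `Z` has the BAP. -/
theorem statement14 {E X Z : Type*}
    [NormedAddCommGroup E] [NormedSpace ℝ E] [CompleteSpace E]
    [NormedAddCommGroup X] [NormedSpace ℝ X] [CompleteSpace X]
    [NormedAddCommGroup Z] [NormedSpace ℝ Z] [CompleteSpace Z]
    (i : E →L[ℝ] X) (q : X →L[ℝ] Z) (hexact : IsExactSeq i q)
    (hE : IsLinftySpace E) (hX : HasBAP X) : HasBAP Z := by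
  classical
  obtain ⟨hinj, hsurj, hrange⟩ := hexact
  obtain ⟨lE, hlE1, hEprop⟩ := hE
  obtain ⟨l, hl1, hBAP⟩ := hX
  have hqi : ∀ e : E, q (i e) = 0 := by
    intro e
    have h1 : i e ∈ LinearMap.ker (q : X →ₗ[ℝ] Z) :=
      hrange ▸ LinearMap.mem_range_self _ e
    simpa using h1
  have hiker : ∀ v : X, q v = 0 → ∃ e : E, i e = v := by
    intro v hv
    have h1 : v ∈ LinearMap.range (i : E →ₗ[ℝ] X) := by
      rw [hrange]; simpa using hv
    obtain ⟨e, he⟩ := h1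
    exact ⟨e, he⟩
  obtain ⟨cq, hcq0, hcq⟩ := q.exists_preimage_norm_le hsurj
  -- the embedding constant of `i`
  haveI : CompleteSpace (LinearMap.ker (q : X →ₗ[ℝ] Z)) := by exact q.isClosed_ker.completeSpace_coe
  set i' : E →L[ℝ] LinearMap.ker (q : X →ₗ[ℝ] Z) :=
    i.codRestrict (LinearMap.ker (q : X →ₗ[ℝ] Z)) (fun e => by
      simpa [LinearMap.mem_ker] using hqi e) with hi'
  have hker : LinearMap.ker (i' : E →ₗ[ℝ] LinearMap.ker (q : X →ₗ[ℝ] Z)) = ⊥ :=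
    LinearMap.ker_eq_bot.2 fun a b hab => hinj (congrArg Subtype.val hab)
  have hrange' : LinearMap.range (i' : E →ₗ[ℝ] LinearMap.ker (q : X →ₗ[ℝ] Z)) = ⊤ := by
    refine LinearMap.range_eq_top.2 ?_
    rintro ⟨v, hv⟩
    obtain ⟨e, he⟩ := hiker v (by simpa [LinearMap.mem_ker] using hv)
    exact ⟨e, Subtype.ext he⟩
  set eqv := ContinuousLinearEquiv.ofBijective i' hker hrange' with heqv
  set ci : ℝ := ‖eqv.symm.toContinuousLinearMap‖ with hcidef
  have hci : 0 ≤ ci := ContinuousLinearMap.opNorm_nonneg _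
  have hilow : ∀ e : E, ‖e‖ ≤ ci * ‖i e‖ := by
    intro e
    have h1 : eqv.symm (eqv e) = e := eqv.symm_apply_apply e
    have h2 : ‖eqv.symm (eqv e)‖ ≤ ci * ‖eqv e‖ :=
      eqv.symm.toContinuousLinearMap.le_opNorm _
    have h3 : ‖eqv e‖ = ‖i e‖ := rfl
    rw [h1, h3] at h2
    exact h2
  obtain ⟨C₁, hC₁0, hC₁⟩ := uniform_lift i q hinj lE hEprop ci hci hilow hiker hqi
    cq hcq0.le hcq
  set Cpi : ℝ := 1 + C₁ * ‖q‖ with hCpidef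
  have hCpi0 : 0 ≤ Cpi := by positivity
  have hlE0 : (0:ℝ) ≤ lE := le_trans zero_le_one hlE1
  set μ : ℝ := lE * (ci * Cpi) with hμdef
  have hμ0 : 0 ≤ μ := by positivity
  have hl0 : (0:ℝ) ≤ l := le_trans zero_le_one hl1
  set Bb : ℝ := ‖q‖ * l + μ * (‖q‖ * l * ‖i‖) with hBbdef
  have hBb0 : 0 ≤ Bb := by positivity
  refine ⟨max 1 (cq * Bb), le_max_left _ _, ?_⟩
  intro F hF
  haveI := hF
  set k := Module.finrank ℝ F with hk
  set bF : Module.Basis (Fin k) ℝ F := Module.finBasis ℝ F with hbF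
  set z : Fin k → Z := fun j => ((bF j : F) : Z) with hz
  have hzli : LinearIndependent ℝ z :=
    bF.linearIndependent.map' F.subtype (Submodule.ker_subtype F)
  obtain ⟨x, hx1, hx2⟩ := hC₁ k z hzli
  haveI : FiniteDimensional ℝ (Submodule.span ℝ (Set.range x)) :=
    FiniteDimensional.span_of_finite ℝ (Set.finite_range x)
  obtain ⟨T, hTfin, hTnorm, hTfix⟩ := hBAP (Submodule.span ℝ (Set.range x)) inferInstance
  have hTx : ∀ j, T (x j) = x j := fun j =>
    hTfix _ (Submodule.subset_span (Set.mem_range_self j))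
  have hqsum : ∀ c : Fin k → ℝ, q (∑ j, c j • x j) = ∑ j, c j • z j := by
    intro c
    rw [map_sum]
    exact Finset.sum_congr rfl fun j _ => by rw [map_smul, hx1]
  have Hx : ∀ (e : E) (c : Fin k → ℝ), ‖i e‖ ≤ Cpi * ‖i e + ∑ j, c j • x j‖ := by
    intro e c
    set mm : X := i e + ∑ j, c j • x j with hmm
    have hqm : q mm = ∑ j, c j • z j := by
      rw [hmm, map_add, hqi, zero_add, hqsum]
    have h2 : ‖∑ j, c j • x j‖ ≤ C₁ * ‖∑ j, c j • z j‖ := hx2 c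
    have h3 : ‖∑ j, c j • z j‖ ≤ ‖q‖ * ‖mm‖ := by
      rw [← hqm]; exact q.le_opNorm mm
    have h4 : ‖i e‖ ≤ ‖mm‖ + ‖∑ j, c j • x j‖ := by
      have h5 : i e = mm - ∑ j, c j • x j := by rw [hmm]; abel
      rw [h5]; exact norm_sub_le _ _
    have h6 : C₁ * ‖∑ j, c j • z j‖ ≤ C₁ * (‖q‖ * ‖mm‖) :=
      mul_le_mul_of_nonneg_left h3 hC₁0
    have h7 : Cpi * ‖mm‖ = ‖mm‖ + C₁ * (‖q‖ * ‖mm‖) := by rw [hCpidef]; ring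
    linarith only [h2, h4, h6, h7]
  have Hind : ∀ c : Fin k → ℝ, ∑ j, c j • x j = 0 → ∀ j, c j = 0 := by
    intro c hc j
    have h1 : ∑ j, c j • z j = 0 := by
      rw [← hqsum, hc, map_zero]
    exact Fintype.linearIndependent_iff.1 hzli c h1 j
  have hP : ∀ D : Submodule ℝ E, FiniteDimensional ℝ D →
      ∃ P : X →L[ℝ] E, ‖P‖ ≤ μ ∧ (∀ e ∈ D, P (i e) = e) ∧ ∀ j, P (x j) = 0 := by
    intro D hD
    obtain ⟨P, hP1, hP2, hP3⟩ := retraction_lemma i hinj lE hEprop ci hci hilow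
      k x Cpi hCpi0 Hx Hind D hD
    exact ⟨P, by rw [hμdef]; exact hP1, hP2, hP3⟩
  obtain ⟨R, hRn, hRi, hRx, hRmem⟩ := limit_R i q T hTfin μ hμ0 k x hP
  set B : X →L[ℝ] Z := q.comp T - R with hBdef
  have hBapp : ∀ v, B v = q (T v) - R v := fun v => rfl
  have hB0 : ∀ e : E, B (i e) = 0 := fun e => by rw [hBapp, hRi, sub_self]
  have hBq : ∀ v v' : X, q v = q v' → B v = B v' := by
    intro v v' hvv
    have h1 : q (v - v') = 0 := by rw [map_sub, hvv, sub_self]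
    obtain ⟨e, he⟩ := hiker _ h1
    have h2 : B (v - v') = 0 := by rw [← he]; exact hB0 e
    have h3 : B v - B v' = 0 := by rw [← map_sub]; exact h2
    exact sub_eq_zero.1 h3
  choose ξ hξ1 hξ2 using hcq
  set Slin : Z →ₗ[ℝ] Z :=
    { toFun := fun w => B (ξ w)
      map_add' := fun w w' => by
        show B (ξ (w + w')) = B (ξ w) + B (ξ w')
        have h1 : q (ξ (w + w')) = q (ξ w + ξ w') := by
          rw [map_add, hξ1, hξ1, hξ1]
        rw [hBq _ _ h1, map_add]
      map_smul' := fun c w => by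
        show B (ξ (c • w)) = c • B (ξ w)
        have h1 : q (ξ (c • w)) = q (c • ξ w) := by
          rw [map_smul, hξ1, hξ1]
        rw [hBq _ _ h1, map_smul] } with hSlin
  have hSb : ∀ w, ‖Slin w‖ ≤ (‖B‖ * cq) * ‖w‖ := by
    intro w
    have h0 : Slin w = B (ξ w) := rfl
    rw [h0]
    calc ‖B (ξ w)‖ ≤ ‖B‖ * ‖ξ w‖ := B.le_opNorm _
      _ ≤ ‖B‖ * (cq * ‖w‖) := mul_le_mul_of_nonneg_left (hξ2 w) (norm_nonneg _)
      _ = (‖B‖ * cq) * ‖w‖ := by ring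
  set S : Z →L[ℝ] Z := Slin.mkContinuous (‖B‖ * cq) hSb with hS
  have hSapp : ∀ w, S w = B (ξ w) := fun w => rfl
  have hSq : ∀ v : X, S (q v) = B v := fun v => by
    rw [hSapp]; exact hBq _ _ (hξ1 _)
  refine ⟨S, ?_, ?_, ?_⟩
  · haveI := hTfin
    haveI : FiniteDimensional ℝ
        (Submodule.map (q : X →ₗ[ℝ] Z) (LinearMap.range (T : X →ₗ[ℝ] X))) :=
      Module.Finite.map _ _
    have hle : LinearMap.range (S : Z →ₗ[ℝ] Z) ≤
        Submodule.map (q : X →ₗ[ℝ] Z) (LinearMap.range (T : X →ₗ[ℝ] X)) := by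
      rintro _ ⟨w, rfl⟩
      have h1 : S w = q (T (ξ w)) - R (ξ w) := by rw [hSapp, hBapp]
      have h2 : q (T (ξ w)) ∈
          Submodule.map (q : X →ₗ[ℝ] Z) (LinearMap.range (T : X →ₗ[ℝ] X)) :=
        ⟨T (ξ w), LinearMap.mem_range_self _ _, rfl⟩
      have h3 := hRmem (ξ w)
      rw [show ((S : Z →ₗ[ℝ] Z) w) = S w from rfl, h1]
      exact Submodule.sub_mem _ h2 h3
    exact Submodule.finiteDimensional_of_le hle
  · have h1 : ‖S‖ ≤ ‖B‖ * cq :=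
      Slin.mkContinuous_norm_le (mul_nonneg (norm_nonneg _) hcq0.le) hSb
    have h2 : ‖B‖ ≤ Bb := by
      have h3 : ‖B‖ ≤ ‖q.comp T‖ + ‖R‖ := by
        rw [hBdef]; exact norm_sub_le _ _
      have h4 : ‖q.comp T‖ ≤ ‖q‖ * l :=
        le_trans (q.opNorm_comp_le T) (mul_le_mul_of_nonneg_left hTnorm (norm_nonneg q))
      have h5 : ‖R‖ ≤ μ * (‖q‖ * l * ‖i‖) := by
        refine le_trans hRn ?_
        refine mul_le_mul_of_nonneg_left ?_ hμ0
        refine le_trans ((q.comp T).opNorm_comp_le i) ?_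
        exact mul_le_mul_of_nonneg_right h4 (norm_nonneg i)
      rw [hBbdef]
      linarith only [h3, h4, h5]
    have h6 : ‖B‖ * cq ≤ cq * Bb := by
      have := mul_le_mul_of_nonneg_right h2 hcq0.le
      linarith only [this]
    exact le_trans h1 (le_trans h6 (le_max_right _ _))
  · have hSz : ∀ j, S (z j) = z j := by
      intro j
      have h1 : S (z j) = S (q (x j)) := by rw [hx1]
      rw [h1, hSq, hBapp, hTx, hRx, sub_zero, hx1]
    intro f hf
    have h2 : (S : Z →ₗ[ℝ] Z).comp F.subtype = F.subtype := by
      refine bF.ext fun j => ?_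
      show S ((bF j : F) : Z) = ((bF j : F) : Z)
      exact hSz j
    exact LinearMap.congr_fun h2 ⟨f, hf⟩

end
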